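/- For every n ∈ ℕ with n ≥ 1, every (a_j)_{1≤j≤n} ∈ ℂ^n, every (γ_{j,k})_{1≤j<k≤n} ∈ ℝ^{n(n−1)/2} and every ρ, η ∈ B_n: M_n((a_j)_{1≤j≤n},(γ_{j,k})_{1≤j<k≤n})(ρ,η) = A + B, where A := e^{i·[j≥2]·Σ_{l=1}^{j−1} b_n(ρ)(l)·γ_{l,j}}·a_j if there exists j ∈ {1,…,n} (necessarily unique) such that b_n(ρ)(j) < b_n(η)(j) and b_n(ρ)(k) = b_n(η)(k) for all k ∈ {1,…,n}\{j}, and A := 0 otherwise; and B := e^{−i·[j≥2]·Σ_{l=1}^{j−1} b_n(η)(l)·γ_{l,j}}·conj(a_j) if there exists j ∈ {1,…,n} (necessarily unique) such that b_n(ρ)(j) > b_n(η)(j) and b_n(ρ)(k) = b_n(η)(k) for all k ∈ {1,…,n}\{j}, and B := 0 otherwise. Here [P] is 1 if P holds and 0 otherwise. -/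

import Mathlib

open Matrix

/-- The recursively defined unitary matrix `U_n((ξ_j))` (0-based indexing of `B_n = Fin (2^n)`). -/
noncomputable def Umat : (n : ℕ) → (Fin n → ℝ) → Matrix (Fin (2 ^ n)) (Fin (2 ^ n)) ℂ
  | 0, _ => 1
  | n + 1, ξ =>
      (Matrix.reindex (finSumFinEquiv.trans (finCongr (by rw [pow_succ, mul_two])))
        (finSumFinEquiv.trans (finCongr (by rw [pow_succ, mul_two]))))
        (Matrix.fromBlocks (Umat n fun j => ξ j.castSucc) 0 0
          (Complex.exp (Complex.I * (ξ (Fin.last n) : ℂ)) • Umat n fun j => ξ j.castSucc))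

/-- The recursively defined hopping matrix `M_n((a_j), (γ_{j,k}))`; only the entries
`γ j k` with `j < k` are relevant. -/
noncomputable def Mmat : (n : ℕ) → (Fin n → ℂ) → (Fin n → Fin n → ℝ) →
    Matrix (Fin (2 ^ n)) (Fin (2 ^ n)) ℂ
  | 0, _, _ => 0
  | n + 1, a, γ =>
      (Matrix.reindex (finSumFinEquiv.trans (finCongr (by rw [pow_succ, mul_two])))
        (finSumFinEquiv.trans (finCongr (by rw [pow_succ, mul_two]))))
        (Matrix.fromBlocks
          (Mmat n (fun j => a j.castSucc) fun j k => γ j.castSucc k.castSucc)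
          (a (Fin.last n) • Umat n fun j => γ j.castSucc (Fin.last n))
          ((starRingEnd ℂ) (a (Fin.last n)) • (Umat n fun j => γ j.castSucc (Fin.last n))ᴴ)
          (Mmat n (fun j => a j.castSucc) fun j k => γ j.castSucc k.castSucc))

/-- `b_n(ρ)(j)` : the `j`-th binary digit of `ρ` (0-based). -/
def bdig {N : ℕ} (ρ : Fin N) (j : ℕ) : ℕ := if Nat.testBit ρ.val j then 1 else 0


open Matrix

/-- nat-level digit -/
def bN (v j : ℕ) : ℕ := if v.testBit j then 1 else 0

lemma bN_high {x n j : ℕ} (h : x < 2 ^ n) (hj : n ≤ j) : bN x j = 0 := by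
  have : x < 2 ^ j := lt_of_lt_of_le h (Nat.pow_le_pow_right (by norm_num) hj)
  simp [bN, Nat.testBit_lt_two_pow this]

lemma bN_add_low {x n j : ℕ} (hj : j < n) : bN (2 ^ n + x) j = bN x j := by
  simp [bN, Nat.testBit_two_pow_add_gt hj]

lemma bN_add_high {x n : ℕ} (h : x < 2 ^ n) : bN (2 ^ n + x) n = 1 := by
  simp [bN, Nat.testBit_two_pow_add_eq, Nat.testBit_lt_two_pow h]

lemma bN_inj {x y n : ℕ} (hx : x < 2 ^ n) (hy : y < 2 ^ n)
    (h : ∀ j < n, bN x j = bN y j) : x = y := by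
  apply Nat.eq_of_testBit_eq
  intro j
  rcases lt_or_ge j n with hj | hj
  · have := h j hj
    simp only [bN] at this
    rcases hb : x.testBit j with _ | _ <;> rcases hb' : y.testBit j with _ | _ <;>
      simp [hb, hb'] at this ⊢
  · have h1 : x < 2 ^ j := lt_of_lt_of_le hx (Nat.pow_le_pow_right (by norm_num) hj)
    have h2 : y < 2 ^ j := lt_of_lt_of_le hy (Nat.pow_le_pow_right (by norm_num) hj)
    rw [Nat.testBit_lt_two_pow h1, Nat.testBit_lt_two_pow h2]

lemma val_inl {m n N : ℕ} (h : m + n = N) (i : Fin m) :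
    ((finSumFinEquiv.trans (finCongr h)) (Sum.inl i) : Fin N).val = i.val := by simp

lemma val_inr {m n N : ℕ} (h : m + n = N) (i : Fin n) :
    ((finSumFinEquiv.trans (finCongr h)) (Sum.inr i) : Fin N).val = m + i.val := by simp
lemma bN_add_low' {n x : ℕ} (l : Fin n) : bN (2 ^ n + x) l.val = bN x l.val :=
  bN_add_low l.isLt

/-- splitting a `<`-restricted sum at `castSucc` -/
lemma inner_sum_castSucc {n : ℕ} (b γ : Fin (n + 1) → ℝ) (j : Fin n) :
    (∑ l : Fin (n + 1), if l < j.castSucc then b l * γ l else 0) =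
      ∑ l : Fin n, if l < j then b l.castSucc * γ l.castSucc else 0 := by
  rw [Fin.sum_univ_castSucc]
  rw [if_neg (by simp only [Fin.lt_def, Fin.coe_castSucc, Fin.val_last]; omega), add_zero]
  exact Finset.sum_congr rfl fun l _ => by simp [Fin.castSucc_lt_castSucc_iff]

lemma inner_sum_last {n : ℕ} (b γ : Fin (n + 1) → ℝ) :
    (∑ l : Fin (n + 1), if l < Fin.last n then b l * γ l else 0) =
      ∑ l : Fin n, b l.castSucc * γ l.castSucc := by
  rw [Fin.sum_univ_castSucc, if_neg (lt_irrefl _), add_zero]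
  exact Finset.sum_congr rfl fun l _ => if_pos (Fin.castSucc_lt_last l)

lemma forall_castSucc_iff {n : ℕ} {x y : ℕ} (j : Fin n)
    (bx by' : ℕ → ℕ) (hbx : ∀ k < n, bx k = bN x k) (hby : ∀ k < n, by' k = bN y k)
    (hlast : bx n = by' n) :
    (∀ k : Fin (n + 1), k ≠ j.castSucc → bx k.val = by' k.val) ↔
      (∀ k : Fin n, k ≠ j → bN x k.val = bN y k.val) := by
  constructor
  · intro h k hk
    have := h k.castSucc (by simpa [Fin.castSucc_inj] using hk)
    rwa [Fin.coe_castSucc, hbx _ k.isLt, hby _ k.isLt] at this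
  · intro h k hk
    rcases Nat.lt_succ_iff_lt_or_eq.mp k.isLt with hkv | hkv
    · have hne : (⟨k.val, hkv⟩ : Fin n) ≠ j := by
        intro hc
        apply hk
        rw [Fin.ext_iff] at hc ⊢
        simpa using hc
      have := h ⟨k.val, hkv⟩ hne
      rwa [hbx _ hkv, hby _ hkv]
    · rw [hkv]; exact hlast

lemma forall_ne_last_iff_eq {n : ℕ} {x y : ℕ} (hx : x < 2 ^ n) (hy : y < 2 ^ n)
    (bx by' : ℕ → ℕ) (hbx : ∀ k < n, bx k = bN x k) (hby : ∀ k < n, by' k = bN y k) :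
    (∀ k : Fin (n + 1), k ≠ Fin.last n → bx k.val = by' k.val) ↔ x = y := by
  constructor
  · intro h
    apply bN_inj hx hy
    intro k hk
    have := h ⟨k, Nat.lt_succ_of_lt hk⟩ (by simp [Fin.ext_iff]; omega)
    rwa [hbx _ hk, hby _ hk] at this
  · rintro rfl k hk
    have hkv : k.val < n := by
      rcases Nat.lt_succ_iff_lt_or_eq.mp k.isLt with h | h
      · exact h
      · exact absurd (Fin.ext h) hk
    rw [hbx _ hkv, hby _ hkv]
-- appended after defs
lemma bdig_eq {N : ℕ} (ρ : Fin N) (j : ℕ) : bdig ρ j = bN ρ.val j := rfl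

lemma Umat_apply (n : ℕ) (ξ : Fin n → ℝ) (ρ η : Fin (2 ^ n)) :
    Umat n ξ ρ η =
      if ρ = η then
        Complex.exp (Complex.I *
          Complex.ofReal (∑ j : Fin n, (bN ρ.val j.val : ℝ) * ξ j))
      else 0 := by
  induction n with
  | zero =>
      have hv : ρ.val < 1 := by simpa using ρ.isLt
      have hv' : η.val < 1 := by simpa using η.isLt
      have : ρ = η := Fin.ext (by omega)
      simp [Umat, Matrix.one_apply, this]
  | succ n IH =>
      obtain ⟨x, rfl⟩ := (finSumFinEquiv.trans (finCongr (by rw [pow_succ, mul_two] :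
        2 ^ n + 2 ^ n = 2 ^ (n + 1)))).surjective ρ
      obtain ⟨y, rfl⟩ := (finSumFinEquiv.trans (finCongr (by rw [pow_succ, mul_two] :
        2 ^ n + 2 ^ n = 2 ^ (n + 1)))).surjective η
      rw [Umat]
      rw [Matrix.reindex_apply, Matrix.submatrix_apply, Equiv.symm_apply_apply,
        Equiv.symm_apply_apply]
      rcases x with ρ' | ρ' <;> rcases y with η' | η'
      · rw [Matrix.fromBlocks_apply₁₁, IH]
        have he : (finSumFinEquiv.trans (finCongr (by rw [pow_succ, mul_two] :
            2 ^ n + 2 ^ n = 2 ^ (n + 1)))) (Sum.inl ρ') =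
            (finSumFinEquiv.trans (finCongr (by rw [pow_succ, mul_two]))) (Sum.inl η') ↔
            ρ' = η' := by
          rw [Equiv.apply_eq_iff_eq]; exact Sum.inl.inj_iff
        by_cases hρη : ρ' = η'
        · subst hρη
          rw [if_pos rfl, if_pos rfl]
          congr 2
          rw [val_inl, Fin.sum_univ_castSucc]
          simp only [Fin.coe_castSucc, Fin.val_last]
          rw [bN_high ρ'.isLt le_rfl]
          simp
        · rw [if_neg hρη, if_neg (fun h => hρη (he.mp h))]
      · rw [Matrix.fromBlocks_apply₁₂]
        rw [if_neg (by simp [Fin.ext_iff, val_inl, val_inr]; omega)]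
        simp
      · rw [Matrix.fromBlocks_apply₂₁]
        rw [if_neg (by simp [Fin.ext_iff, val_inl, val_inr]; omega)]
        simp
      · rw [Matrix.fromBlocks_apply₂₂, Matrix.smul_apply, IH, smul_eq_mul]
        have he : (finSumFinEquiv.trans (finCongr (by rw [pow_succ, mul_two] :
            2 ^ n + 2 ^ n = 2 ^ (n + 1)))) (Sum.inr ρ') =
            (finSumFinEquiv.trans (finCongr (by rw [pow_succ, mul_two]))) (Sum.inr η') ↔
            ρ' = η' := by
          rw [Equiv.apply_eq_iff_eq]; exact Sum.inr.inj_iff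
        by_cases hρη : ρ' = η'
        · subst hρη
          rw [if_pos rfl, if_pos rfl, ← Complex.exp_add]
          congr 1
          rw [val_inr, Fin.sum_univ_castSucc]
          simp only [Fin.coe_castSucc, Fin.val_last, bN_add_low']
          rw [bN_add_high ρ'.isLt]
          push_cast
          ring
        · rw [if_neg hρη, if_neg (fun h => hρη (he.mp h)), mul_zero]
lemma inner_sum_castSucc1 {n : ℕ} (v : ℕ) (γ : Fin (n + 1) → Fin (n + 1) → ℝ) (j : Fin n) :
    (∑ l : Fin (n + 1), if l < j.castSucc then (bN v l.val : ℝ) * γ l j.castSucc else 0) =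
      ∑ l : Fin n, if l < j then (bN v l.val : ℝ) * γ l.castSucc j.castSucc else 0 := by
  rw [inner_sum_castSucc (fun l => (bN v l.val : ℝ)) (fun l => γ l j.castSucc) j]
  simp only [Fin.coe_castSucc]

lemma inner_sum_castSucc2 {n : ℕ} (v : ℕ) (γ : Fin (n + 1) → Fin (n + 1) → ℝ) (j : Fin n) :
    (∑ l : Fin (n + 1), if l < j.castSucc then (bN (2 ^ n + v) l.val : ℝ) * γ l j.castSucc else 0) =
      ∑ l : Fin n, if l < j then (bN v l.val : ℝ) * γ l.castSucc j.castSucc else 0 := by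
  rw [inner_sum_castSucc (fun l => (bN (2 ^ n + v) l.val : ℝ)) (fun l => γ l j.castSucc) j]
  simp only [Fin.coe_castSucc, bN_add_low']

lemma inner_sum_last' {n : ℕ} (v : ℕ) (γ : Fin (n + 1) → ℝ) :
    (∑ l : Fin (n + 1), if l < Fin.last n then (bN v l.val : ℝ) * γ l else 0) =
      ∑ l : Fin n, (bN v l.val : ℝ) * γ l.castSucc := by
  rw [inner_sum_last (fun l => (bN v l.val : ℝ)) γ]
  simp only [Fin.coe_castSucc]

lemma Mmat_entry_aux : ∀ (n : ℕ) (a : Fin n → ℂ) (γ : Fin n → Fin n → ℝ) (ρ η : Fin (2 ^ n)),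
    Mmat n a γ ρ η =
      (∑ j : Fin n,
          if bdig ρ j.val < bdig η j.val ∧ ∀ k : Fin n, k ≠ j → bdig ρ k.val = bdig η k.val then
            Complex.exp (Complex.I *
                Complex.ofReal (∑ l : Fin n, if l < j then (bdig ρ l.val : ℝ) * γ l j else 0)) *
              a j
          else 0) +
      (∑ j : Fin n,
          if bdig η j.val < bdig ρ j.val ∧ ∀ k : Fin n, k ≠ j → bdig ρ k.val = bdig η k.val then
            Complex.exp (-(Complex.I *
                Complex.ofReal (∑ l : Fin n, if l < j then (bdig η l.val : ℝ) * γ l j else 0))) *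
              (starRingEnd ℂ) (a j)
          else 0) := by
  intro n
  induction n with
  | zero => intro a γ ρ η; simp [Mmat]
  | succ n IH =>
    intro a γ ρ η
    obtain ⟨x, rfl⟩ := (finSumFinEquiv.trans (finCongr (by rw [pow_succ, mul_two] :
      2 ^ n + 2 ^ n = 2 ^ (n + 1)))).surjective ρ
    obtain ⟨y, rfl⟩ := (finSumFinEquiv.trans (finCongr (by rw [pow_succ, mul_two] :
      2 ^ n + 2 ^ n = 2 ^ (n + 1)))).surjective η
    rw [Mmat, Matrix.reindex_apply, Matrix.submatrix_apply, Equiv.symm_apply_apply,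
      Equiv.symm_apply_apply]
    rcases x with ρ' | ρ' <;> rcases y with η' | η'
    · -- inl, inl
      rw [Matrix.fromBlocks_apply₁₁, IH]
      simp only [bdig_eq, val_inl]
      have hlast0 : bN ρ'.val n = bN η'.val n := by
        rw [bN_high ρ'.isLt le_rfl, bN_high η'.isLt le_rfl]
      congr 1
      · conv_rhs => rw [Fin.sum_univ_castSucc]
        simp only [Fin.val_last, Fin.coe_castSucc]
        rw [if_neg (by rw [bN_high ρ'.isLt le_rfl, bN_high η'.isLt le_rfl]; simp), add_zero]
        refine Finset.sum_congr rfl fun j _ => ?_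
        have hcond := and_congr (Iff.rfl :
            (bN ρ'.val j.val < bN η'.val j.val) ↔ _)
          (forall_castSucc_iff (x := ρ'.val) (y := η'.val) j _ _
            (fun _ _ => rfl) (fun _ _ => rfl) hlast0)
        by_cases hc : bN ρ'.val j.val < bN η'.val j.val ∧
            ∀ k : Fin n, k ≠ j → bN ρ'.val k.val = bN η'.val k.val
        · erw [if_pos hc, if_pos (hcond.mpr hc), inner_sum_castSucc1]
        · erw [if_neg hc, if_neg (fun h => hc (hcond.mp h))]
      · conv_rhs => rw [Fin.sum_univ_castSucc]
        simp only [Fin.val_last, Fin.coe_castSucc]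
        rw [if_neg (by rw [bN_high ρ'.isLt le_rfl, bN_high η'.isLt le_rfl]; simp), add_zero]
        refine Finset.sum_congr rfl fun j _ => ?_
        have hcond := and_congr (Iff.rfl :
            (bN η'.val j.val < bN ρ'.val j.val) ↔ _)
          (forall_castSucc_iff (x := ρ'.val) (y := η'.val) j _ _
            (fun _ _ => rfl) (fun _ _ => rfl) hlast0)
        by_cases hc : bN η'.val j.val < bN ρ'.val j.val ∧
            ∀ k : Fin n, k ≠ j → bN ρ'.val k.val = bN η'.val k.val
        · erw [if_pos hc, if_pos (hcond.mpr hc), inner_sum_castSucc1]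
        · erw [if_neg hc, if_neg (fun h => hc (hcond.mp h))]
    · -- inl, inr : upper-right block
      rw [Matrix.fromBlocks_apply₁₂, Matrix.smul_apply, Umat_apply, smul_eq_mul]
      simp only [bdig_eq, val_inl, val_inr]
      have hkill : ∀ j : Fin n, ¬ (∀ k : Fin (n + 1), k ≠ j.castSucc →
          bN ρ'.val k.val = bN (2 ^ n + η'.val) k.val) := by
        intro j hall
        have h := hall (Fin.last n) (Fin.castSucc_lt_last j).ne'
        rw [Fin.val_last, bN_high ρ'.isLt le_rfl, bN_add_high η'.isLt] at h
        exact absurd h (by norm_num)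
      have hiff : (∀ k : Fin (n + 1), k ≠ Fin.last n →
          bN ρ'.val k.val = bN (2 ^ n + η'.val) k.val) ↔ ρ' = η' := by
        rw [forall_ne_last_iff_eq ρ'.isLt η'.isLt _ _ (fun _ _ => rfl)
          (fun k hk => bN_add_low hk)]
        exact ⟨fun h => Fin.ext h, fun h => congrArg Fin.val h⟩
      have hS1 : (∑ j : Fin (n + 1),
          if bN ρ'.val j.val < bN (2 ^ n + η'.val) j.val ∧ ∀ k : Fin (n + 1), k ≠ j →
              bN ρ'.val k.val = bN (2 ^ n + η'.val) k.val then
            Complex.exp (Complex.I * Complex.ofReal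
              (∑ l : Fin (n + 1), if l < j then (bN ρ'.val l.val : ℝ) * γ l j else 0)) * a j
          else 0) =
          if ρ' = η' then
            Complex.exp (Complex.I * Complex.ofReal
              (∑ l : Fin n, (bN ρ'.val l.val : ℝ) * γ l.castSucc (Fin.last n))) *
              a (Fin.last n)
          else 0 := by
        rw [Fin.sum_univ_castSucc,
          Finset.sum_congr rfl (fun j _ => if_neg fun h => hkill j h.2),
          Finset.sum_const_zero, zero_add]
        simp only [Fin.val_last]
        simp only [bN_high ρ'.isLt le_rfl, bN_add_high η'.isLt]
        by_cases he : ρ' = η'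
        · rw [if_pos ⟨by norm_num, hiff.mpr he⟩, if_pos he, inner_sum_last']
        · rw [if_neg (fun h => he (hiff.mp h.2)), if_neg he]
      have hS2 : (∑ j : Fin (n + 1),
          if bN (2 ^ n + η'.val) j.val < bN ρ'.val j.val ∧ ∀ k : Fin (n + 1), k ≠ j →
              bN ρ'.val k.val = bN (2 ^ n + η'.val) k.val then
            Complex.exp (-(Complex.I * Complex.ofReal
              (∑ l : Fin (n + 1), if l < j then (bN (2 ^ n + η'.val) l.val : ℝ) * γ l j else 0))) *
              (starRingEnd ℂ) (a j)
          else 0) = 0 := by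
        rw [Fin.sum_univ_castSucc,
          Finset.sum_congr rfl (fun j _ => if_neg fun h => hkill j h.2),
          Finset.sum_const_zero, zero_add]
        simp only [Fin.val_last]
        simp only [bN_high ρ'.isLt le_rfl, bN_add_high η'.isLt]
        rw [if_neg (by norm_num)]
      rw [hS1, hS2, add_zero]
      by_cases he : ρ' = η'
      · rw [if_pos he, if_pos he, mul_comm]
      · rw [if_neg he, if_neg he, mul_zero]
    · -- inr, inl : lower-left block
      rw [Matrix.fromBlocks_apply₂₁, Matrix.smul_apply, Matrix.conjTranspose_apply,
        Umat_apply, smul_eq_mul]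
      simp only [bdig_eq, val_inl, val_inr]
      have hkill : ∀ j : Fin n, ¬ (∀ k : Fin (n + 1), k ≠ j.castSucc →
          bN (2 ^ n + ρ'.val) k.val = bN η'.val k.val) := by
        intro j hall
        have h := hall (Fin.last n) (Fin.castSucc_lt_last j).ne'
        rw [Fin.val_last, bN_high η'.isLt le_rfl, bN_add_high ρ'.isLt] at h
        exact absurd h (by norm_num)
      have hiff : (∀ k : Fin (n + 1), k ≠ Fin.last n →
          bN (2 ^ n + ρ'.val) k.val = bN η'.val k.val) ↔ ρ' = η' := by
        rw [forall_ne_last_iff_eq ρ'.isLt η'.isLt _ _ (fun k hk => bN_add_low hk)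
          (fun _ _ => rfl)]
        exact ⟨fun h => Fin.ext h, fun h => congrArg Fin.val h⟩
      have hS1 : (∑ j : Fin (n + 1),
          if bN (2 ^ n + ρ'.val) j.val < bN η'.val j.val ∧ ∀ k : Fin (n + 1), k ≠ j →
              bN (2 ^ n + ρ'.val) k.val = bN η'.val k.val then
            Complex.exp (Complex.I * Complex.ofReal
              (∑ l : Fin (n + 1), if l < j then (bN (2 ^ n + ρ'.val) l.val : ℝ) * γ l j else 0)) *
              a j
          else 0) = 0 := by
        rw [Fin.sum_univ_castSucc,
          Finset.sum_congr rfl (fun j _ => if_neg fun h => hkill j h.2),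
          Finset.sum_const_zero, zero_add]
        simp only [Fin.val_last]
        simp only [bN_high η'.isLt le_rfl, bN_add_high ρ'.isLt]
        rw [if_neg (by norm_num)]
      have hS2 : (∑ j : Fin (n + 1),
          if bN η'.val j.val < bN (2 ^ n + ρ'.val) j.val ∧ ∀ k : Fin (n + 1), k ≠ j →
              bN (2 ^ n + ρ'.val) k.val = bN η'.val k.val then
            Complex.exp (-(Complex.I * Complex.ofReal
              (∑ l : Fin (n + 1), if l < j then (bN η'.val l.val : ℝ) * γ l j else 0))) *
              (starRingEnd ℂ) (a j)
          else 0) =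
          if ρ' = η' then
            Complex.exp (-(Complex.I * Complex.ofReal
              (∑ l : Fin n, (bN η'.val l.val : ℝ) * γ l.castSucc (Fin.last n)))) *
              (starRingEnd ℂ) (a (Fin.last n))
          else 0 := by
        rw [Fin.sum_univ_castSucc,
          Finset.sum_congr rfl (fun j _ => if_neg fun h => hkill j h.2),
          Finset.sum_const_zero, zero_add]
        simp only [Fin.val_last]
        simp only [bN_high η'.isLt le_rfl, bN_add_high ρ'.isLt]
        by_cases he : ρ' = η'
        · rw [if_pos ⟨by norm_num, hiff.mpr he⟩, if_pos he, inner_sum_last']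
        · rw [if_neg (fun h => he (hiff.mp h.2)), if_neg he]
      rw [hS1, hS2, zero_add]
      by_cases he : ρ' = η'
      · rw [if_pos he, if_pos (he.symm : η' = ρ'), mul_comm]
        congr 1
        rw [Complex.star_def, ← Complex.exp_conj]
        congr 1
        simp [_root_.map_mul, Complex.conj_I, Complex.conj_ofReal, neg_mul]
      · rw [if_neg (fun h => he h.symm), if_neg he, star_zero, mul_zero]
    · -- inr, inr
      rw [Matrix.fromBlocks_apply₂₂, IH]
      simp only [bdig_eq, val_inr]
      have hlast1 : bN (2 ^ n + ρ'.val) n = bN (2 ^ n + η'.val) n := by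
        rw [bN_add_high ρ'.isLt, bN_add_high η'.isLt]
      congr 1
      · conv_rhs => rw [Fin.sum_univ_castSucc]
        simp only [Fin.val_last, Fin.coe_castSucc]
        rw [if_neg (by rw [bN_add_high ρ'.isLt, bN_add_high η'.isLt]; simp), add_zero]
        refine Finset.sum_congr rfl fun j _ => ?_
        have hcond := and_congr
          (by rw [bN_add_low' j, bN_add_low' j] :
            (bN (2 ^ n + ρ'.val) j.val < bN (2 ^ n + η'.val) j.val) ↔
              (bN ρ'.val j.val < bN η'.val j.val))
          (forall_castSucc_iff (x := ρ'.val) (y := η'.val) j _ _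
            (fun _ hk => bN_add_low hk) (fun _ hk => bN_add_low hk) hlast1)
        by_cases hc : bN ρ'.val j.val < bN η'.val j.val ∧
            ∀ k : Fin n, k ≠ j → bN ρ'.val k.val = bN η'.val k.val
        · erw [if_pos hc, if_pos (hcond.mpr hc), inner_sum_castSucc2]
        · erw [if_neg hc, if_neg (fun h => hc (hcond.mp h))]
      · conv_rhs => rw [Fin.sum_univ_castSucc]
        simp only [Fin.val_last, Fin.coe_castSucc]
        rw [if_neg (by rw [bN_add_high ρ'.isLt, bN_add_high η'.isLt]; simp), add_zero]
        refine Finset.sum_congr rfl fun j _ => ?_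
        have hcond := and_congr
          (by rw [bN_add_low' j, bN_add_low' j] :
            (bN (2 ^ n + η'.val) j.val < bN (2 ^ n + ρ'.val) j.val) ↔
              (bN η'.val j.val < bN ρ'.val j.val))
          (forall_castSucc_iff (x := ρ'.val) (y := η'.val) j _ _
            (fun _ hk => bN_add_low hk) (fun _ hk => bN_add_low hk) hlast1)
        by_cases hc : bN η'.val j.val < bN ρ'.val j.val ∧
            ∀ k : Fin n, k ≠ j → bN ρ'.val k.val = bN η'.val k.val
        · erw [if_pos hc, if_pos (hcond.mpr hc), inner_sum_castSucc2]
        · erw [if_neg hc, if_neg (fun h => hc (hcond.mp h))]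

/-- Lemma 2.2 (1): the entry formula for `M_n`.  The index `j` in each clause is
necessarily unique, so the clauses are expressed as sums over `j` of the indicator of the
condition times the corresponding value. -/
theorem Mmat_entry (n : ℕ) (hn : 1 ≤ n) (a : Fin n → ℂ) (γ : Fin n → Fin n → ℝ)
    (ρ η : Fin (2 ^ n)) :
    Mmat n a γ ρ η =
      (∑ j : Fin n,
          if bdig ρ j.val < bdig η j.val ∧ ∀ k : Fin n, k ≠ j → bdig ρ k.val = bdig η k.val then
            Complex.exp (Complex.I *
                Complex.ofReal (∑ l : Fin n, if l < j then (bdig ρ l.val : ℝ) * γ l j else 0)) *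
              a j
          else 0) +
      (∑ j : Fin n,
          if bdig η j.val < bdig ρ j.val ∧ ∀ k : Fin n, k ≠ j → bdig ρ k.val = bdig η k.val then
            Complex.exp (-(Complex.I *
                Complex.ofReal (∑ l : Fin n, if l < j then (bdig η l.val : ℝ) * γ l j else 0))) *
              (starRingEnd ℂ) (a j)
          else 0) := by
  exact Mmat_entry_aux n a γ ρ η
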